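/- Let G be a graph such that every cycle in G has length congruent to 2 modulo 3, and let G' be obtained from G by adding a path P with 4 edges whose endpoints are the two endpoints of some edge uv ∈ E(G) and whose internal vertices are new. Then every cycle in G' also has length congruent to 2 modulo 3. -/

import Mathlib

/-- The graph obtained from `G` by adding a path with 4 edges
`u - n₀ - n₁ - n₂ - v` whose internal vertices `n₀, n₁, n₂` are new. -/
def addFourPath {V : Type*} (G : SimpleGraph V) (u v : V) :
    SimpleGraph (V ⊕ Fin 3) :=
  SimpleGraph.fromRel (fun a b =>
    match a, b with
    | Sum.inl x, Sum.inl y => G.Adj x y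
    | Sum.inl x, Sum.inr i => (x = u ∧ i = 0) ∨ (x = v ∧ i = 2)
    | Sum.inr _, Sum.inl _ => False
    | Sum.inr i, Sum.inr j => (i = 0 ∧ j = 1) ∨ (i = 1 ∧ j = 2))

namespace AddFourPathAux

open SimpleGraph Walk

variable {V : Type*} {G : SimpleGraph V} {u v : V}

lemma adj_inl_inl {x y : V} :
    (addFourPath G u v).Adj (Sum.inl x) (Sum.inl y) ↔ G.Adj x y := by
  constructor
  · intro h
    rw [addFourPath, SimpleGraph.fromRel_adj] at h
    rcases h.2 with h' | h'
    · exact h'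
    · exact h'.symm
  · intro h
    rw [addFourPath, SimpleGraph.fromRel_adj]
    exact ⟨by simpa using h.ne, Or.inl h⟩

lemma adj_inr0 {z : V ⊕ Fin 3} (h : (addFourPath G u v).Adj (Sum.inr 0) z) :
    z = Sum.inl u ∨ z = Sum.inr 1 := by
  rw [addFourPath, SimpleGraph.fromRel_adj] at h
  rcases z with y | j
  · rcases h.2 with h' | h'
    · exact h'.elim
    · rcases h' with ⟨rfl, _⟩ | ⟨rfl, h2⟩
      · exact Or.inl rfl
      · exact absurd h2 (by decide)
  · rcases h.2 with (⟨_, rfl⟩ | ⟨h1, _⟩) | (⟨_, h1⟩ | ⟨_, h1⟩)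
    · exact Or.inr rfl
    · exact absurd h1 (by decide)
    · exact absurd h1 (by decide)
    · exact absurd h1 (by decide)

lemma adj_inr1 {z : V ⊕ Fin 3} (h : (addFourPath G u v).Adj (Sum.inr 1) z) :
    z = Sum.inr 0 ∨ z = Sum.inr 2 := by
  rw [addFourPath, SimpleGraph.fromRel_adj] at h
  rcases z with y | j
  · rcases h.2 with h' | h'
    · exact h'.elim
    · rcases h' with ⟨_, h2⟩ | ⟨_, h2⟩
      · exact absurd h2 (by decide)
      · exact absurd h2 (by decide)
  · rcases h.2 with (⟨h1, _⟩ | ⟨_, rfl⟩) | (⟨rfl, _⟩ | ⟨_, h1⟩)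
    · exact absurd h1 (by decide)
    · exact Or.inr rfl
    · exact Or.inl rfl
    · exact absurd h1 (by decide)

lemma adj_inr2 {z : V ⊕ Fin 3} (h : (addFourPath G u v).Adj (Sum.inr 2) z) :
    z = Sum.inl v ∨ z = Sum.inr 1 := by
  rw [addFourPath, SimpleGraph.fromRel_adj] at h
  rcases z with y | j
  · rcases h.2 with h' | h'
    · exact h'.elim
    · rcases h' with ⟨rfl, h2⟩ | ⟨rfl, _⟩
      · exact absurd h2 (by decide)
      · exact Or.inl rfl
  · rcases h.2 with (⟨h1, _⟩ | ⟨h1, _⟩) | (⟨_, h1⟩ | ⟨rfl, _⟩)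
    · exact absurd h1 (by decide)
    · exact absurd h1 (by decide)
    · exact absurd h1 (by decide)
    · exact Or.inr rfl

/-- Pull back a walk all of whose vertices are `inl` to a walk in `G`. -/
lemma pull {x y : V ⊕ Fin 3} (w : (addFourPath G u v).Walk x y) :
    ∀ a b : V, x = Sum.inl a → y = Sum.inl b →
      (∀ z ∈ w.support, ∃ c, z = Sum.inl c) →
      ∃ p : G.Walk a b, p.length = w.length ∧
        p.support.map Sum.inl = w.support ∧
        p.edges.map (Sym2.map Sum.inl) = w.edges := by
  induction w with
  | nil =>
    rintro a b rfl hb _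
    obtain rfl : a = b := by exact Sum.inl.inj hb
    exact ⟨Walk.nil, by simp, by simp, by simp⟩
  | @cons s t y' h q ih =>
    rintro a b rfl rfl hsup
    obtain ⟨c, rfl⟩ : ∃ c, t = Sum.inl c := by
      refine hsup t ?_
      simp [Walk.support_cons]
    obtain ⟨p, hl, hs, he⟩ := ih c b rfl rfl
      (fun z hz => hsup z (by simp [Walk.support_cons, hz]))
    refine ⟨Walk.cons (adj_inl_inl.mp h) p, by simp [hl], ?_, ?_⟩
    · simp [Walk.support_cons, hs]
    · simp [Walk.edges_cons, he]

/-- A walk in the big graph between two `G`-adjacent `inl`-vertices, with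
no repeated vertices and all vertices `inl`, has length `≡ 1 (mod 3)`. -/
lemma mid (hG : ∀ (x : V) (w : G.Walk x x), w.IsCycle → w.length % 3 = 2)
    {a b : V} (hab : G.Adj a b)
    (m : (addFourPath G u v).Walk (Sum.inl a) (Sum.inl b))
    (hnd : m.support.Nodup)
    (hall : ∀ z ∈ m.support, ∃ c, z = Sum.inl c) :
    m.length % 3 = 1 := by
  obtain ⟨p, hl, hs, _⟩ := pull m a b rfl rfl hall
  have hpnd : p.support.Nodup := by
    rw [← hs] at hnd
    exact hnd.of_map _
  have hpath : p.IsPath := (Walk.isPath_def _).mpr hpnd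
  rw [← hl]
  by_cases he : s(b, a) ∈ p.edges
  · -- then p must be the single edge a-b
    cases p with
    | nil => exact absurd rfl hab.ne
    | @cons _ c _ h' p' =>
      rw [Walk.edges_cons, List.mem_cons] at he
      rcases he with he | he
      · -- s(b,a) = s(a,c) hence c = b
        have hcb : c = b := by
          rw [Sym2.eq_iff] at he
          rcases he with ⟨h1, _⟩ | ⟨h1, _⟩
          · exact absurd h1.symm hab.ne
          · exact h1.symm
        subst hcb
        cases p' with
        | nil => simp
        | @cons _ d _ h'' p'' =>
          exfalso
          have hb := Walk.end_mem_support p''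
          have hnd2 : (Walk.cons h'' p'').support.Nodup := by
            have := hpath.support_nodup
            rw [Walk.support_cons, List.nodup_cons] at this
            exact this.2
          rw [Walk.support_cons, List.nodup_cons] at hnd2
          exact hnd2.1 hb
      · exfalso
        have ha : a ∈ p'.support := Walk.snd_mem_support_of_mem_edges p' he
        have := hpath.support_nodup
        rw [Walk.support_cons, List.nodup_cons] at this
        exact this.1 ha
  · have hcyc : (Walk.cons hab.symm p).IsCycle :=
      (Walk.cons_isCycle_iff p hab.symm).mpr ⟨hpath, he⟩
    have := hG b (Walk.cons hab.symm p) hcyc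
    rw [Walk.length_cons] at this
    omega

lemma head_last_nodup {α : Type*} {l : List α} {a : α} (hn : l.Nodup)
    (h2 : 2 ≤ l.length) (hh : l.head? = some a) (hl : l.getLast? = some a) :
    False := by
  match l, h2 with
  | x :: y :: t, _ =>
    have hx : x = a := by simpa using hh
    rw [List.getLast?_cons_cons] at hl
    have hmem : a ∈ y :: t := List.mem_of_getLast? hl
    rw [List.nodup_cons] at hn
    exact hn.1 (hx ▸ hmem)

/-- In a cycle, the second vertex and the second-to-last vertex are distinct. -/
lemma second_ne {z t t' : V ⊕ Fin 3}
    (h : (addFourPath G u v).Adj z t) (h' : (addFourPath G u v).Adj z t')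
    {q : (addFourPath G u v).Walk t z} {q' : (addFourPath G u v).Walk t' z}
    (w : (addFourPath G u v).Walk z z) (hc : w.IsCycle)
    (hw : w = Walk.cons h q) (hw' : w.reverse = Walk.cons h' q') : t ≠ t' := by
  rintro rfl
  have e1 : w.edges.head? = some s(z, t) := by rw [hw]; simp
  have e2 : w.edges.getLast? = some s(z, t) := by
    rw [← List.head?_reverse, ← Walk.edges_reverse, hw']
    simp
  exact head_last_nodup hc.isCircuit.isTrail.edges_nodup
    (by rw [Walk.length_edges]; exact le_trans (by norm_num) hc.three_le_length) e1 e2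

/-- A cycle through a vertex `z` whose only possible neighbours are `inl a`
and `inr 1` must pass through `inr 1`. -/
lemma key {z : V ⊕ Fin 3} {a : V}
    (hza : ∀ y, (addFourPath G u v).Adj z y → y = Sum.inl a ∨ y = Sum.inr 1)
    (w : (addFourPath G u v).Walk z z) (hc : w.IsCycle) :
    (Sum.inr 1 : V ⊕ Fin 3) ∈ w.support := by
  cases w with
  | nil => exact absurd rfl hc.ne_nil
  | @cons _ t _ h q =>
    rcases hza t h with rfl | rfl
    · -- first step goes to inl a; look at the reverse
      have hnn : ¬ (Walk.cons h q).reverse.Nil := by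
        rw [Walk.not_nil_iff_lt_length, Walk.length_reverse]
        simp
      obtain ⟨t', h', q', hw'⟩ := Walk.not_nil_iff.mp hnn
      rcases hza t' h' with rfl | rfl
      · exact absurd rfl (second_ne h h' (Walk.cons h q) hc rfl hw')
      · have : (Sum.inr 1 : V ⊕ Fin 3) ∈ (Walk.cons h q).reverse.support := by
          rw [hw', Walk.support_cons]
          exact List.mem_cons_of_mem _ q'.start_mem_support
        rw [Walk.support_reverse, List.mem_reverse] at this
        exact this
    · rw [Walk.support_cons]
      exact List.mem_cons_of_mem _ q.start_mem_support

lemma mem_inr1 {x : V ⊕ Fin 3} (w : (addFourPath G u v).Walk x x)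
    (hc : w.IsCycle) {j : Fin 3} (hj : Sum.inr j ∈ w.support) :
    (Sum.inr 1 : V ⊕ Fin 3) ∈ w.support := by
  classical
  have transfer : ∀ (z : V ⊕ Fin 3), z ∈ w.support →
      (∀ y, (addFourPath G u v).Adj z y → y = Sum.inl u ∨ y = Sum.inr 1) ∨
      (∀ y, (addFourPath G u v).Adj z y → y = Sum.inl v ∨ y = Sum.inr 1) →
      (Sum.inr 1 : V ⊕ Fin 3) ∈ w.support := by
    intro z hz hadj
    have hz1 : (Sum.inr 1 : V ⊕ Fin 3) ∈ (w.rotate _ hz).support := by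
      rcases hadj with hadj | hadj
      · exact key hadj (w.rotate _ hz) (hc.rotate hz)
      · exact key hadj (w.rotate _ hz) (hc.rotate hz)
    rcases List.mem_cons.mp ((Walk.support_eq_cons (w.rotate _ hz)) ▸ hz1) with h1 | h1
    · rw [h1]; exact hz
    · have := ((Walk.support_rotate w _ hz).perm.mem_iff).mp h1
      exact List.mem_of_mem_tail this
  fin_cases j
  · exact transfer _ hj (Or.inl (fun y hy => adj_inr0 hy))
  · exact hj
  · exact transfer _ hj (Or.inr (fun y hy => adj_inr2 hy))

/-- The inner part of the decomposition: a duplicate-free walk from `inr 1`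
to `inl a` avoiding `inr k` has length `≡ 0 (mod 3)`. -/
lemma inner (hG : ∀ (x : V) (w : G.Walk x x), w.IsCycle → w.length % 3 = 2)
    {a b : V} (hba : G.Adj b a) (i k : Fin 3)
    (hadji : ∀ z, (addFourPath G u v).Adj (Sum.inr i) z →
      z = Sum.inl b ∨ z = Sum.inr 1)
    (hcov : ∀ j : Fin 3, j = 1 ∨ j = i ∨ j = k)
    (r : (addFourPath G u v).Walk (Sum.inr 1) (Sum.inl a))
    (hik : ∀ z, (addFourPath G u v).Adj (Sum.inr 1) z →
      z = Sum.inr i ∨ z = Sum.inr k)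
    (hnd : r.support.Nodup)
    (hk : (Sum.inr k : V ⊕ Fin 3) ∉ r.support) :
    r.length % 3 = 0 := by
  cases r with
  | @cons _ s _ h r₂ =>
    rcases hik s h with rfl | rfl
    · -- s = inr i
      cases r₂ with
      | @cons _ s₃ _ h₂ r₃ =>
        rw [Walk.support_cons, Walk.support_cons, List.nodup_cons,
          List.nodup_cons] at hnd
        rw [Walk.support_cons, Walk.support_cons] at hk
        rcases hadji s₃ h₂ with rfl | rfl
        · -- s₃ = inl b, middle walk r₃ : inl b → inl a
          have hall : ∀ z ∈ r₃.support, ∃ c, z = Sum.inl c := by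
            intro z hz
            rcases z with c | j
            · exact ⟨c, rfl⟩
            · exfalso
              rcases hcov j with rfl | rfl | rfl
              · exact hnd.1 (List.mem_cons_of_mem _ hz)
              · exact hnd.2.1 hz
              · exact hk (List.mem_cons_of_mem _ (List.mem_cons_of_mem _ hz))
          have := mid hG hba r₃ hnd.2.2 hall
          simp only [Walk.length_cons]
          omega
        · -- s₃ = inr 1 : repeated vertex
          exfalso
          exact hnd.1 (List.mem_cons_of_mem _ (Walk.start_mem_support r₃))
    · -- s = inr k : excluded
      exfalso
      rw [Walk.support_cons] at hk
      exact hk (List.mem_cons_of_mem _ (Walk.start_mem_support r₂))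

/-- The core case: a cycle based at `inr 1`. -/
lemma core (huv : G.Adj u v)
    (hG : ∀ (x : V) (w : G.Walk x x), w.IsCycle → w.length % 3 = 2)
    (w : (addFourPath G u v).Walk (Sum.inr 1) (Sum.inr 1)) (hc : w.IsCycle) :
    w.length % 3 = 2 := by
  cases w with
  | nil => exact absurd rfl hc.ne_nil
  | @cons _ t _ h q =>
    have hadj1 : ∀ z, (addFourPath G u v).Adj (Sum.inr 1) z →
        z = Sum.inr 0 ∨ z = Sum.inr 2 := fun z hz => adj_inr1 hz
    rcases adj_inr1 h with rfl | rfl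
    · -- t = inr 0
      cases q with
      | @cons _ t₂ _ h₂ q₂ =>
        rcases adj_inr0 h₂ with rfl | rfl
        · -- t₂ = inl u : middle part q₂ : inl u → inr 1
          have hnd : q₂.support.Nodup ∧ (Sum.inr 0 : V ⊕ Fin 3) ∉ q₂.support := by
            have := hc.support_nodup
            rw [Walk.support_cons, List.tail_cons, Walk.support_cons,
              List.nodup_cons] at this
            exact ⟨this.2, this.1⟩
          have hr := inner hG huv.symm 2 0
            (fun z hz => adj_inr2 hz)
            (by decide)
            q₂.reverse
            (fun z hz => (adj_inr1 hz).symm)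
            (by rw [Walk.support_reverse]; exact List.nodup_reverse.mpr hnd.1)
            (by rw [Walk.support_reverse, List.mem_reverse]; exact hnd.2)
          rw [Walk.length_reverse] at hr
          simp only [Walk.length_cons]
          omega
        · -- t₂ = inr 1 : the edge is repeated
          exfalso
          have := hc.isCircuit.isTrail.edges_nodup
          simp [Walk.edges_cons, Sym2.eq_swap] at this
    · -- t = inr 2 : symmetric
      cases q with
      | @cons _ t₂ _ h₂ q₂ =>
        rcases adj_inr2 h₂ with rfl | rfl
        · have hnd : q₂.support.Nodup ∧ (Sum.inr 2 : V ⊕ Fin 3) ∉ q₂.support := by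
            have := hc.support_nodup
            rw [Walk.support_cons, List.tail_cons, Walk.support_cons,
              List.nodup_cons] at this
            exact ⟨this.2, this.1⟩
          have hr := inner hG huv 0 2
            (fun z hz => adj_inr0 hz)
            (by decide)
            q₂.reverse
            (fun z hz => adj_inr1 hz)
            (by rw [Walk.support_reverse]; exact List.nodup_reverse.mpr hnd.1)
            (by rw [Walk.support_reverse, List.mem_reverse]; exact hnd.2)
          rw [Walk.length_reverse] at hr
          simp only [Walk.length_cons]
          omega
        · exfalso
          have := hc.isCircuit.isTrail.edges_nodup
          simp [Walk.edges_cons, Sym2.eq_swap] at this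

end AddFourPathAux

/-- Let `G` be a graph in which every cycle has length `≡ 2 (mod 3)`,
and let `G'` be obtained from `G` by adding a path with 4 edges joining the
endpoints of an edge `uv ∈ E(G)`, with new internal vertices.  Then every cycle of
`G'` also has length `≡ 2 (mod 3)`. -/
theorem cycles_two_mod_three_extend {V : Type*} (G : SimpleGraph V)
    (u v : V) (huv : G.Adj u v)
    (hG : ∀ (x : V) (w : G.Walk x x), w.IsCycle → w.length % 3 = 2) :
    ∀ (x : V ⊕ Fin 3) (w : (addFourPath G u v).Walk x x),
      w.IsCycle → w.length % 3 = 2 := by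
  intro x w hw
  classical
  rcases Classical.em (∀ z ∈ w.support, ∃ c, z = Sum.inl c) with hall | hall
  · -- the cycle lies entirely in `G`
    obtain ⟨a, rfl⟩ := hall x (SimpleGraph.Walk.start_mem_support w)
    obtain ⟨p, hl, hs, he⟩ := AddFourPathAux.pull w a a rfl rfl hall
    have hcyc : p.IsCycle := by
      refine ⟨⟨⟨?_⟩, ?_⟩, ?_⟩
      · have := hw.isCircuit.isTrail.edges_nodup
        rw [← he] at this
        exact this.of_map _
      · intro hnil
        subst hnil
        have := hw.three_le_length
        rw [← hl] at this
        simp at this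
      · have := hw.support_nodup
        rw [← hs, ← List.map_tail] at this
        exact this.of_map _
    rw [← hl]
    exact hG a p hcyc
  · push_neg at hall
    obtain ⟨z, hz, hni⟩ := hall
    obtain ⟨j, rfl⟩ : ∃ j, z = Sum.inr j := by
      rcases z with c | j
      · exact absurd rfl (hni c)
      · exact ⟨j, rfl⟩
    have h1 := AddFourPathAux.mem_inr1 w hw hz
    have hc' := hw.rotate h1
    have hlen : (w.rotate _ h1).length = w.length := by
      rw [← SimpleGraph.Walk.length_edges, ← SimpleGraph.Walk.length_edges]
      exact (SimpleGraph.Walk.rotate_edges w _ h1).perm.length_eq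
    have := AddFourPathAux.core huv hG (w.rotate _ h1) hc'
    rwa [hlen] at this
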